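/- With the setup below, there exists R₀ < ∞ depending only on d such that for all R ≥ max(R₀, 2·max_{3≤i≤d}|p_i|) and all integers m ≠ n, m, n ≥ 1, the sets of lines ℒ_{𝔠_{1,m}} ∩ ℒ_{B¹_{R^m}} and ℒ_{𝔠_{1,n}} ∩ ℒ_{B¹_{R^n}} are disjoint; in particular no line of ℝ^d intersects all four of the sets 𝔠_{1,m}, B¹_{R^m}, 𝔠_{1,n}, B¹_{R^n}. -/

import Mathlib

open MeasureTheory
open scoped ENNReal

noncomputable section

/-- A line in `ℝ^d`: a set of the form `{a + t • v : t ∈ ℝ}` with `v ≠ 0`. -/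
def IsLine {d : ℕ} (L : Set (EuclideanSpace ℝ (Fin d))) : Prop :=
  ∃ a v : EuclideanSpace ℝ (Fin d), v ≠ 0 ∧ L = {x | ∃ t : ℝ, x = a + t • v}

/-- The standard basis vector of `ℝ^d` with a `1` in (0-indexed) coordinate `i`
(junk value `0` if `i ≥ d`). -/
def stdv (d i : ℕ) : EuclideanSpace ℝ (Fin d) :=
  if h : i < d then EuclideanSpace.single (⟨i, h⟩ : Fin d) 1 else 0

/-- The (0-indexed) `i`-th coordinate of a vector (junk value `0` if `i ≥ d`). -/
def coordNat {d : ℕ} (x : EuclideanSpace ℝ (Fin d)) (i : ℕ) : ℝ :=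
  if h : i < d then x ⟨i, h⟩ else 0

/-- The cylinder of radius `r` around a set `L`. -/
def cylinder {d : ℕ} (L : Set (EuclideanSpace ℝ (Fin d))) (r : ℝ) :
    Set (EuclideanSpace ℝ (Fin d)) :=
  {x | Metric.infDist x L ≤ r}

/-- The line `L₁ = {t • e₁ : t ∈ ℝ}`. -/
def lineOne (d : ℕ) : Set (EuclideanSpace ℝ (Fin d)) := {x | ∃ t : ℝ, x = t • stdv d 0}

/-- The cylinder `𝔠₁` of radius `√d` around `L₁`. -/
def cylOne (d : ℕ) : Set (EuclideanSpace ℝ (Fin d)) := cylinder (lineOne d) (Real.sqrt d)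

/-- The piece `𝔠_{1,m} = {x ∈ 𝔠₁ : R^{m-1}/2 ≤ |x₁| < R^m/2 - 10√d}`. -/
def cylOnePiece (d : ℕ) (R : ℝ) (m : ℕ) : Set (EuclideanSpace ℝ (Fin d)) :=
  {x ∈ cylOne d | R ^ (m - 1) / 2 ≤ |coordNat x 0| ∧
    |coordNat x 0| < R ^ m / 2 - 10 * Real.sqrt d}

/-- The direction vector `(l₁, l₂, 0, …, 0)` of the line `L₂`. -/
def dirTwo (d : ℕ) (l1 l2 : ℝ) : EuclideanSpace ℝ (Fin d) := l1 • stdv d 0 + l2 • stdv d 1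

/-- The line `L₂ = {p + t • (l₁, l₂, 0, …, 0) : t ∈ ℝ}`. -/
def lineTwo (d : ℕ) (p : EuclideanSpace ℝ (Fin d)) (l1 l2 : ℝ) :
    Set (EuclideanSpace ℝ (Fin d)) :=
  {x | ∃ t : ℝ, x = p + t • dirTwo d l1 l2}

/-- The cylinder `𝔠₂` of radius `√d` around `L₂`. -/
def cylTwo (d : ℕ) (p : EuclideanSpace ℝ (Fin d)) (l1 l2 : ℝ) :
    Set (EuclideanSpace ℝ (Fin d)) :=
  cylinder (lineTwo d p l1 l2) (Real.sqrt d)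

/-- Orthogonal projection onto the affine line `L₂` (valid when `(l₁,l₂)` is a unit vector). -/
def projLineTwo (d : ℕ) (p : EuclideanSpace ℝ (Fin d)) (l1 l2 : ℝ)
    (x : EuclideanSpace ℝ (Fin d)) : EuclideanSpace ℝ (Fin d) :=
  p + (inner ℝ (x - p) (dirTwo d l1 l2) : ℝ) • dirTwo d l1 l2

/-- The piece `𝔠_{2,m} = {x ∈ 𝔠₂ : R^{m-1}/2 ≤ |Π_{L₂}(x) - p| < R^m/2 - 10√d}`. -/
def cylTwoPiece (d : ℕ) (p : EuclideanSpace ℝ (Fin d)) (l1 l2 R : ℝ) (m : ℕ) :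
    Set (EuclideanSpace ℝ (Fin d)) :=
  {x ∈ cylTwo d p l1 l2 | R ^ (m - 1) / 2 ≤ dist (projLineTwo d p l1 l2 x) p ∧
    dist (projLineTwo d p l1 l2 x) p < R ^ m / 2 - 10 * Real.sqrt d}

/-- The point `q_{i,m} = p + N·R^m·e_{i+3}` (`i` is 1-based), where `N = 10d + 1`. -/
def qpt (d : ℕ) (p : EuclideanSpace ℝ (Fin d)) (R : ℝ) (m i : ℕ) :
    EuclideanSpace ℝ (Fin d) :=
  p + ((10 * d + 1 : ℝ) * R ^ m) • stdv d (i + 2)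

/-- The box `B^i_{R^m} = q_{i,m} + [-R^m/2, R^m/2]^d` (`i` is 1-based). -/
def bigBox (d : ℕ) (p : EuclideanSpace ℝ (Fin d)) (R : ℝ) (m i : ℕ) :
    Set (EuclideanSpace ℝ (Fin d)) :=
  {x | ∀ j : Fin d, |x j - qpt d p R m i j| ≤ R ^ m / 2}

/-- A line `L` meets both sets `S` and `T`, i.e. `L ∈ ℒ_S ∩ ℒ_T`. -/
def meets {d : ℕ} (L S T : Set (EuclideanSpace ℝ (Fin d))) : Prop :=
  (L ∩ S).Nonempty ∧ (L ∩ T).Nonempty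

lemma collinear_coords {d : ℕ} {L : Set (EuclideanSpace ℝ (Fin d))} (hL : IsLine L)
    {x y z : EuclideanSpace ℝ (Fin d)} (hx : x ∈ L) (hy : y ∈ L) (hz : z ∈ L)
    (i j : Fin d) :
    (y i - x i) * (z j - x j) = (y j - x j) * (z i - x i) := by
  obtain ⟨a, v, -, rfl⟩ := hL
  obtain ⟨tx, rfl⟩ := hx
  obtain ⟨ty, rfl⟩ := hy
  obtain ⟨tz, rfl⟩ := hz
  simp [PiLp.add_apply, PiLp.smul_apply, smul_eq_mul]
  ring

lemma stdv_apply_ne {d i : ℕ} (j : Fin d) (hj : (j : ℕ) ≠ i) : stdv d i j = 0 := by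
  unfold stdv
  split
  · rw [EuclideanSpace.single_apply, if_neg]
    intro h; apply hj; rw [h]
  · rfl

lemma stdv_apply_eq {d i : ℕ} (j : Fin d) (hj : (j : ℕ) = i) : stdv d i j = 1 := by
  have h : i < d := hj ▸ j.2
  unfold stdv
  rw [dif_pos h, EuclideanSpace.single_apply, if_pos]
  exact Fin.ext hj

lemma abs_coord_le {d : ℕ} (x : EuclideanSpace ℝ (Fin d)) (j : Fin d) (hj : (j:ℕ) ≠ 0)
    (hx : x ∈ cylOne d) : |x j| ≤ Real.sqrt d := by
  refine le_trans ?_ hx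
  rw [Metric.infDist_eq_iInf]
  have : Nonempty (lineOne d) := ⟨⟨0, 0, by simp⟩⟩
  apply le_ciInf
  rintro ⟨y, t, rfl⟩
  show |x j| ≤ dist x (t • stdv d 0)
  have hy : (t • stdv d 0) j = 0 := by
    rw [PiLp.smul_apply, stdv_apply_ne j hj, smul_zero]
  rw [EuclideanSpace.dist_eq]
  have h1 : |x j| = Real.sqrt (dist (x j) ((t • stdv d 0) j) ^ 2) := by
    rw [hy]; simp [Real.sqrt_sq_eq_abs, Real.dist_eq]
  rw [h1]
  exact Real.sqrt_le_sqrt (Finset.single_le_sum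
    (f := fun i => dist (x i) ((t • stdv d 0) i) ^ 2) (fun i _ => sq_nonneg _)
    (Finset.mem_univ j))

set_option maxHeartbeats 1000000 in
lemma main_aux (d : ℕ) (hd : 4 ≤ d) (p : EuclideanSpace ℝ (Fin d))
    (hp0 : coordNat p 0 = 0)
    (R : ℝ) (hR : (d : ℝ) ≤ R) (hpR : ∀ i : Fin d, 2 * |p i| ≤ R)
    (m n : ℕ) (hm : 1 ≤ m) (hmn : m < n)
    (L : Set (EuclideanSpace ℝ (Fin d))) (hL : IsLine L)
    (A : EuclideanSpace ℝ (Fin d)) (hA : A ∈ L ∩ cylOnePiece d R m)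
    (B : EuclideanSpace ℝ (Fin d)) (hB : B ∈ L ∩ cylOnePiece d R n)
    (C : EuclideanSpace ℝ (Fin d)) (hC : C ∈ L ∩ bigBox d p R m 1) : False := by
  have h0d : 0 < d := by omega
  have h3d : 3 < d := by omega
  set i0 : Fin d := ⟨0, h0d⟩ with hi0
  set i3 : Fin d := ⟨3, h3d⟩ with hi3
  have hcoord : ∀ x : EuclideanSpace ℝ (Fin d), coordNat x 0 = x i0 := fun x => dif_pos h0d
  set s : ℝ := Real.sqrt d with hsdef
  have hd4 : (4:ℝ) ≤ (d:ℝ) := by exact_mod_cast hd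
  have hs0 : 0 ≤ s := Real.sqrt_nonneg _
  have hssq : s ^ 2 = (d:ℝ) := Real.sq_sqrt (by positivity)
  have hs2 : 2 ≤ s := by nlinarith
  have hsR : s ≤ R := by nlinarith
  have hR1 : 1 ≤ R := by linarith
  have hRm : R ≤ R ^ m := le_self_pow₀ hR1 (by omega)
  have hRmpos : 0 < R ^ m := by positivity
  have hRn : R ^ m ≤ R ^ (n - 1) := pow_le_pow_right₀ hR1 (by omega)
  obtain ⟨hAL, hAc, -, hA2⟩ := hA
  obtain ⟨hBL, hBc, hB1, -⟩ := hB
  obtain ⟨hCL, hCb⟩ := hC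
  rw [hcoord] at hA2 hB1
  have hA3 : |A i3| ≤ s := abs_coord_le A i3 (by simp [hi3]) hAc
  have hB3 : |B i3| ≤ s := abs_coord_le B i3 (by simp [hi3]) hBc
  -- box coordinate bounds
  have hq0 : qpt d p R m 1 i0 = p i0 := by
    unfold qpt
    rw [PiLp.add_apply, PiLp.smul_apply, stdv_apply_ne i0 (by simp [hi0]), smul_zero, add_zero]
  have hq3 : qpt d p R m 1 i3 = p i3 + (10 * d + 1) * R ^ m := by
    unfold qpt
    rw [PiLp.add_apply, PiLp.smul_apply, stdv_apply_eq i3 (by simp [hi3]), smul_eq_mul, mul_one]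
  have hp00 : p i0 = 0 := by rw [← hcoord p]; exact hp0
  have hC0 : |C i0| ≤ R ^ m / 2 := by
    have := hCb i0; rw [hq0, hp00, sub_zero] at this; exact this
  have hC3 : |C i3 - (p i3 + (10 * d + 1) * R ^ m)| ≤ R ^ m / 2 := by
    have := hCb i3; rwa [hq3] at this
  have hp3 : |p i3| ≤ R / 2 := by linarith [hpR i3]
  -- collinearity
  have key := collinear_coords hL hAL hBL hCL i0 i3
  have habs : |B i0 - A i0| * |C i3 - A i3| = |B i3 - A i3| * |C i0 - A i0| := by
    rw [← abs_mul, ← abs_mul, key]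
  have l1 : 10 * s ≤ |B i0 - A i0| := by
    have h1 := abs_sub_abs_le_abs_sub (B i0) (A i0)
    linarith
  have l2 : 39 * R ^ m ≤ |C i3 - A i3| := by
    have h1 := (abs_le.1 hC3).1
    have h2 := (abs_le.1 hA3).2
    have h3 := (abs_le.1 hp3).1
    have h4 : (41:ℝ) * R ^ m ≤ (10 * d + 1) * R ^ m := by nlinarith
    have h5 : 39 * R ^ m ≤ C i3 - A i3 := by linarith
    exact h5.trans (le_abs_self _)
  have u1 : |B i3 - A i3| ≤ 2 * s := (abs_sub _ _).trans (by linarith)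
  have u2 : |C i0 - A i0| ≤ R ^ m := (abs_sub _ _).trans (by linarith [abs_nonneg (A i0)])
  have big : 10 * s * (39 * R ^ m) ≤ |B i3 - A i3| * |C i0 - A i0| := by
    rw [← habs]
    exact mul_le_mul l1 l2 (by positivity) (abs_nonneg _)
  have small : |B i3 - A i3| * |C i0 - A i0| ≤ 2 * s * R ^ m :=
    mul_le_mul u1 u2 (abs_nonneg _) (by positivity)
  nlinarith [mul_pos (lt_of_lt_of_le two_pos hs2) hRmpos]

theorem stmt10 (d : ℕ) (hd : 4 ≤ d) :
    ∃ R₀ : ℝ, ∀ p : EuclideanSpace ℝ (Fin d),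
      coordNat p 0 = 0 → coordNat p 1 = 0 →
      ∀ R : ℝ, R₀ ≤ R → (∀ i : Fin d, 2 * |p i| ≤ R) →
      ∀ m n : ℕ, 1 ≤ m → 1 ≤ n → m ≠ n →
      ∀ L : Set (EuclideanSpace ℝ (Fin d)), IsLine L →
        ¬ (meets L (cylOnePiece d R m) (bigBox d p R m 1) ∧
           meets L (cylOnePiece d R n) (bigBox d p R n 1)) := by
  refine ⟨d, ?_⟩
  rintro p hp0 hp1 R hR hpR m n hm hn hmn L hL ⟨⟨⟨A, hA⟩, ⟨Cm, hCm⟩⟩, ⟨⟨B, hB⟩, ⟨Cn, hCn⟩⟩⟩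
  rcases lt_or_gt_of_ne hmn with h | h
  · exact main_aux d hd p hp0 R hR hpR m n hm h L hL A hA B hB Cm hCm
  · exact main_aux d hd p hp0 R hR hpR n m hn h L hL B hB A hA Cn hCn
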